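/- Let R be a finite ring with identity in which 2 is not a unit, and let x, y be distinct elements of R. Then x + y is a unit of R if and only if x and y have distinct images in R/J(R) and (x + J(R)) + (y + J(R)) is a unit of R/J(R). -/

import Mathlib

open Pointwise

/-- The unit graph of a ring: distinct `x, y` adjacent iff `x + y` is a unit. -/
def unitGraph (R : Type*) [Ring R] : SimpleGraph R where
  Adj x y := x ≠ y ∧ IsUnit (x + y)
  symm := by
    constructor
    rintro x y ⟨h1, h2⟩
    exact ⟨h1.symm, by rwa [add_comm]⟩
  loopless := by constructor; rintro x ⟨h, _⟩; exact h rfl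

/-- The unitary Cayley graph of a ring: distinct `x, y` adjacent iff `x - y` is a unit. -/
def cayleyGraph (R : Type*) [Ring R] : SimpleGraph R where
  Adj x y := x ≠ y ∧ IsUnit (x - y)
  symm := by
    constructor
    rintro x y ⟨h1, h2⟩
    refine ⟨h1.symm, ?_⟩
    rw [← neg_sub]
    exact h2.neg
  loopless := by constructor; rintro x ⟨h, _⟩; exact h rfl

/-- A set of vertices is independent if no two of its elements are adjacent. -/
def IsIndepSet {V : Type*} (G : SimpleGraph V) (A : Set V) : Prop :=
  ∀ ⦃x⦄, x ∈ A → ∀ ⦃y⦄, y ∈ A → ¬ G.Adj x y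

/-- A maximal independent set. -/
def IsMaxIndepSet {V : Type*} (G : SimpleGraph V) (A : Set V) : Prop :=
  IsIndepSet G A ∧ ∀ B, IsIndepSet G B → A ⊆ B → A = B

/-- A graph is well-covered if all maximal independent sets have the same cardinality. -/
def WellCovered {V : Type*} (G : SimpleGraph V) : Prop :=
  ∀ A B : Set V, IsMaxIndepSet G A → IsMaxIndepSet G B → A.ncard = B.ncard

lemma finMul {M : Type*} [Monoid M] [Finite M] {a b : M} (h : a * b = 1) : b * a = 1 := by
  have hsurj : Function.Surjective (fun x : M => a * x) := fun y => ⟨b * y, by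
    simp [← mul_assoc, h]⟩
  have hinj := Finite.injective_iff_surjective.mpr hsurj
  have : a * (b * a) = a * 1 := by rw [← mul_assoc, h, one_mul, mul_one]
  exact hinj this

lemma finIsUnit {M : Type*} [Monoid M] [Finite M] {a b : M} (h : a * b = 1) : IsUnit a :=
  ⟨⟨a, b, h, finMul h⟩, rfl⟩

lemma one_add_jac_isUnit {R : Type*} [Ring R] [Finite R] {j : R}
    (hj : j ∈ Ideal.jacobson (⊥ : Ideal R)) : IsUnit (1 + j) := by
  obtain ⟨s, hs⟩ := Ideal.exists_mul_sub_mem_of_sub_one_mem_jacobson (1 + j) (by simpa)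
  rw [Ideal.mem_bot, sub_eq_zero] at hs
  exact finIsUnit (finMul hs)

lemma isUnit_iff_map {R : Type*} [Ring R] [Finite R]
    {S : Type*} [Ring S] (π : R →+* S) (hsurj : Function.Surjective π)
    (hker : RingHom.ker π = Ideal.jacobson (⊥ : Ideal R)) (a : R) :
    IsUnit a ↔ IsUnit (π a) := by
  constructor
  · exact fun h => h.map π
  · rintro ⟨u, hu⟩
    obtain ⟨b, hb⟩ := hsurj (↑u⁻¹ : S)
    have hab : a * b - 1 ∈ Ideal.jacobson (⊥ : Ideal R) := by
      rw [← hker, RingHom.mem_ker, map_sub, map_mul, ← hu, hb, map_one, u.mul_inv, sub_self]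
    have : IsUnit (a * b) := by
      have := one_add_jac_isUnit hab
      rwa [add_sub_cancel] at this
    obtain ⟨v, hv⟩ := this
    have : a * (b * ↑v⁻¹) = 1 := by rw [← mul_assoc, ← hv, v.mul_inv]
    exact finIsUnit this

theorem stmt_2 {R : Type*} [Ring R] [Finite R] (h2 : ¬ IsUnit (2 : R))
    {S : Type*} [Ring S] (π : R →+* S) (hsurj : Function.Surjective π)
    (hker : RingHom.ker π = Ideal.jacobson (⊥ : Ideal R))
    (x y : R) (hxy : x ≠ y) :
    IsUnit (x + y) ↔ π x ≠ π y ∧ IsUnit (π x + π y) := by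
  constructor
  · intro h
    refine ⟨?_, by rw [← map_add]; exact h.map π⟩
    intro heq
    have h2y : π (2 * y) = π (x + y) := by
      rw [two_mul, map_add, map_add, heq]
    have h2yu : IsUnit (2 * y) := by
      rw [isUnit_iff_map π hsurj hker, h2y]
      exact h.map π
    obtain ⟨v, hv⟩ := h2yu
    have : (2 : R) * (y * ↑v⁻¹) = 1 := by rw [← mul_assoc, ← hv, v.mul_inv]
    exact h2 (finIsUnit this)
  · rintro ⟨-, hu⟩
    rw [isUnit_iff_map π hsurj hker, map_add]
    exact hu
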